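/- Let (X, μ) be a measure space, γ ∈ (0,1], and let a, b : X → ℝ be measurable functions such that: (i) sup_x |a(x) − b(x)| ≤ ε for some ε ∈ (0, κ/2); (ii) there is a constant C₀ with μ({x : |a(x) − s| ≤ δ}) ≤ C₀ δ for all s ∈ [−2κ, 0] and all δ ∈ (0, κ]; (iii) μ({x : a(x) ≤ 0}) < ∞ and μ({x : −2κ ≤ a(x) ≤ −κ}) < ∞; (iv) on the set {a ≤ −κ} one has a priori integrable bounds for (a)₋^γ and (b)₋^γ. Then | ∫_X (a(x))₋^γ dμ − ∫_X (b(x))₋^γ dμ | ≤ C ε, for a constant C depending only on γ, κ, C₀, μ({a ≤ −κ/2}), and the Lipschitz constant of t ↦ (t)₋^γ on (−∞,−κ/2]. -/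

import Mathlib

open MeasureTheory Real Set
open scoped ENNReal

private lemma measurable_rpow_const' (r : ℝ) : Measurable fun u : ℝ => u ^ r := by
  measurability

private lemma negpart_lip (p q : ℝ) : |max 0 (-p) - max 0 (-q)| ≤ |p - q| := by
  have h := abs_max_sub_max_le_abs (-p) (-q) 0
  rw [max_comm (-p) 0, max_comm (-q) 0] at h
  calc |max 0 (-p) - max 0 (-q)| ≤ |(-p) - (-q)| := h
    _ = |p - q| := by rw [← abs_neg]; ring_nf

private lemma abs_rpow_sub_rpow {γ p q : ℝ} (hγ : 0 ≤ γ) (hp : 0 ≤ p) (hq : 0 ≤ q) :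
    |p ^ γ - q ^ γ| = max p q ^ γ - min p q ^ γ := by
  rcases le_total p q with h | h
  · rw [max_eq_right h, min_eq_left h, abs_of_nonpos (by linarith [Real.rpow_le_rpow hp h hγ])]
    ring
  · rw [max_eq_left h, min_eq_right h, abs_of_nonneg (by linarith [Real.rpow_le_rpow hq h hγ])]

private lemma rpow_sub_le_lip {γ c s t : ℝ} (hγ0 : 0 < γ) (hγ1 : γ ≤ 1) (hc : 0 < c)
    (hcs : c ≤ s) (hst : s ≤ t) : t ^ γ - s ^ γ ≤ γ * c ^ (γ - 1) * (t - s) := by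
  have hs : 0 < s := lt_of_lt_of_le hc hcs
  have hx : -1 ≤ (t - s) / s := le_trans (by norm_num) (div_nonneg (by linarith) hs.le)
  have hB := rpow_one_add_le_one_add_mul_self hx hγ0.le hγ1
  have h1 : (1 : ℝ) + (t - s) / s = t / s := by field_simp; ring
  rw [h1] at hB
  have h2 : t ^ γ ≤ s ^ γ * (1 + γ * ((t - s) / s)) := by
    have : t ^ γ = s ^ γ * (t / s) ^ γ := by
      rw [← Real.mul_rpow hs.le (div_nonneg (by linarith) hs.le)]
      congr 1; field_simp
    rw [this]
    exact mul_le_mul_of_nonneg_left hB (Real.rpow_nonneg hs.le γ)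
  have h3 : s ^ γ * (1 + γ * ((t - s) / s)) = s ^ γ + γ * s ^ (γ - 1) * (t - s) := by
    have hpow : s ^ (γ - 1) = s ^ γ / s := by
      rw [Real.rpow_sub hs, Real.rpow_one]
    rw [hpow]; field_simp
  have h4 : s ^ (γ - 1) ≤ c ^ (γ - 1) :=
    Real.rpow_le_rpow_of_nonpos hc hcs (by linarith)
  have h5 := mul_le_mul_of_nonneg_right h4 (mul_nonneg hγ0.le (sub_nonneg.mpr hst))
  nlinarith [h5]

private lemma layercake_rpow {γ : ℝ} (hγ0 : 0 < γ) {p q : ℝ} (hp : 0 ≤ p)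
    (hpq : p ≤ q) :
    ∫⁻ u in Set.Ioc p q, ENNReal.ofReal (γ * u ^ (γ - 1)) = ENNReal.ofReal (q ^ γ - p ^ γ) := by
  have hr : (-1 : ℝ) < γ - 1 := by linarith
  have hi : IntegrableOn (fun u : ℝ => γ * u ^ (γ - 1)) (Set.Ioc p q) volume := by
    have := (intervalIntegral.intervalIntegrable_rpow' (a := p) (b := q) hr).const_mul γ
    exact this.1
  have hnn : 0 ≤ᵐ[volume.restrict (Set.Ioc p q)] fun u : ℝ => γ * u ^ (γ - 1) := by
    refine (ae_restrict_iff' measurableSet_Ioc).mpr (ae_of_all _ fun u hu => ?_)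
    have hu0 : 0 < u := lt_of_le_of_lt hp hu.1
    positivity
  rw [← ofReal_integral_eq_lintegral_ofReal hi hnn]
  congr 1
  rw [← intervalIntegral.integral_of_le hpq, intervalIntegral.integral_const_mul,
    integral_rpow (Or.inl hr)]
  have h : γ - 1 + 1 = γ := by ring
  rw [h]
  field_simp

set_option maxHeartbeats 1600000 in
theorem stmt_11 {X : Type*} [MeasurableSpace X] (μ : Measure X)
    (γ κ C₀ : ℝ) (hγ : γ ∈ Set.Ioc (0 : ℝ) 1) (hκ : 0 < κ)
    (a : X → ℝ) (ha : Measurable a)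
    (hlevel : ∀ s ∈ Set.Icc (-2 * κ) (0 : ℝ), ∀ δ ∈ Set.Ioc (0 : ℝ) κ,
      μ {x | |a x - s| ≤ δ} ≤ ENNReal.ofReal (C₀ * δ))
    (hfin1 : μ {x | a x ≤ 0} < ⊤)
    (hfin2 : μ {x | a x ∈ Set.Icc (-2 * κ) (-κ)} < ⊤)
    (hint_a : IntegrableOn (fun x => (max 0 (-(a x))) ^ γ) {x | a x ≤ -κ} μ) :
    ∃ C : ℝ, ∀ ε : ℝ, 0 < ε → ε < κ / 2 →
      ∀ b : X → ℝ, Measurable b →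
        (∀ x, |a x - b x| ≤ ε) →
        IntegrableOn (fun x => (max 0 (-(b x))) ^ γ) {x | a x ≤ -κ} μ →
        |(∫ x, (max 0 (-(a x))) ^ γ ∂μ) - ∫ x, (max 0 (-(b x))) ^ γ ∂μ| ≤ C * ε := by
  obtain ⟨hγ0, hγ1⟩ := hγ
  refine ⟨γ * (κ/2) ^ (γ - 1) * (μ {x | a x ≤ 0}).toReal + 2 * max C₀ 0 * (2*κ) ^ γ, ?_⟩
  intro ε hε hεκ b hb hab hint_b
  set F : X → ℝ := fun x => (max 0 (-(a x))) ^ γ with hF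
  set G : X → ℝ := fun x => (max 0 (-(b x))) ^ γ with hG
  have hFx : ∀ x, F x = (max 0 (-(a x))) ^ γ := fun x => rfl
  have hGx : ∀ x, G x = (max 0 (-(b x))) ^ γ := fun x => rfl
  have mF : Measurable F := by measurability
  have mG : Measurable G := by measurability
  have hAmeas : MeasurableSet {x | a x ≤ -κ} := measurableSet_le ha measurable_const
  have hS0 : MeasurableSet {x | a x ≤ (0:ℝ)} := measurableSet_le ha measurable_const
  have hSε : MeasurableSet {x | a x ≤ ε} := measurableSet_le ha measurable_const
  have hfg : ∀ x, |max 0 (-(a x)) - max 0 (-(b x))| ≤ ε :=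
    fun x => le_trans (negpart_lip (a x) (b x)) (hab x)
  have hF0 : ∀ x, ¬ a x ≤ 0 → F x = 0 := by
    intro x hx
    have h1 : max 0 (-(a x)) = 0 := max_eq_left (by linarith [not_le.1 hx])
    rw [hFx, h1, Real.zero_rpow hγ0.ne']
  have hG0 : ∀ x, ¬ a x ≤ ε → G x = 0 := by
    intro x hx
    have h2 := abs_le.1 (hab x)
    have h1 : max 0 (-(b x)) = 0 := max_eq_left (by linarith [not_le.1 hx])
    rw [hGx, h1, Real.zero_rpow hγ0.ne']
  -- Integrability of F
  have hIF : Integrable F μ := by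
    have heq : F = ({x | a x ≤ (0:ℝ)}).indicator F := by
      funext x
      by_cases hx : a x ≤ 0
      · exact (Set.indicator_of_mem (show x ∈ {x | a x ≤ (0:ℝ)} from hx) F).symm
      · rw [Set.indicator_of_notMem (show x ∉ {x | a x ≤ (0:ℝ)} from hx), hF0 x hx]
    rw [heq, integrable_indicator_iff hS0]
    have hsplit : {x | a x ≤ (0:ℝ)} = {x | a x ≤ -κ} ∪ ({x | a x ≤ (0:ℝ)} ∩ {x | -κ < a x}) := by
      ext x; simp only [Set.mem_setOf_eq, Set.mem_union, Set.mem_inter_iff]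
      constructor
      · intro h
        by_cases h2 : a x ≤ -κ
        · exact Or.inl h2
        · exact Or.inr ⟨h, not_le.1 h2⟩
      · rintro (h | ⟨h, _⟩)
        · linarith
        · exact h
    rw [hsplit]
    refine hint_a.union ?_
    refine Measure.integrableOn_of_bounded (M := κ ^ γ)
      ((measure_mono Set.inter_subset_left).trans_lt hfin1).ne mF.aestronglyMeasurable ?_
    refine (ae_restrict_iff' (hS0.inter (measurableSet_lt measurable_const ha))).mpr
      (ae_of_all _ fun x hx => ?_)
    obtain ⟨hx1, hx2⟩ := hx
    simp only [Set.mem_setOf_eq] at hx1 hx2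
    have h1 : max 0 (-(a x)) ≤ κ := max_le hκ.le (by linarith)
    rw [Real.norm_eq_abs, abs_of_nonneg (by rw [hFx]; positivity), hFx]
    exact Real.rpow_le_rpow (le_max_left _ _) h1 hγ0.le
  -- finiteness of the middle region
  have hμN : μ ({x | a x ≤ ε} ∩ {x | -κ < a x}) < ⊤ := by
    have hsub : {x | a x ≤ ε} ∩ {x | -κ < a x} ⊆ {x | a x ≤ 0} ∪ {x | |a x - 0| ≤ ε} := by
      intro x hx
      obtain ⟨hx1, hx2⟩ := hx
      simp only [Set.mem_setOf_eq] at hx1 hx2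
      by_cases h : a x ≤ 0
      · exact Or.inl h
      · right
        simp only [Set.mem_setOf_eq, sub_zero]
        rw [abs_of_pos (not_le.1 h)]
        exact hx1
    calc μ ({x | a x ≤ ε} ∩ {x | -κ < a x})
        ≤ μ ({x | a x ≤ 0} ∪ {x | |a x - 0| ≤ ε}) := measure_mono hsub
      _ ≤ μ {x | a x ≤ 0} + μ {x | |a x - 0| ≤ ε} := measure_union_le _ _
      _ < ⊤ := ENNReal.add_lt_top.mpr ⟨hfin1,
          lt_of_le_of_lt (hlevel 0 ⟨by linarith, le_refl 0⟩ ε ⟨hε, by linarith⟩)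
            ENNReal.ofReal_lt_top⟩
  -- Integrability of G
  have hIG : Integrable G μ := by
    have heq : G = ({x | a x ≤ ε}).indicator G := by
      funext x
      by_cases hx : a x ≤ ε
      · exact (Set.indicator_of_mem (show x ∈ {x | a x ≤ ε} from hx) G).symm
      · rw [Set.indicator_of_notMem (show x ∉ {x | a x ≤ ε} from hx), hG0 x hx]
    rw [heq, integrable_indicator_iff hSε]
    have hsplit : {x | a x ≤ ε} = {x | a x ≤ -κ} ∪ ({x | a x ≤ ε} ∩ {x | -κ < a x}) := by
      ext x; simp only [Set.mem_setOf_eq, Set.mem_union, Set.mem_inter_iff]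
      constructor
      · intro h
        by_cases h2 : a x ≤ -κ
        · exact Or.inl h2
        · exact Or.inr ⟨h, not_le.1 h2⟩
      · rintro (h | ⟨h, _⟩)
        · linarith
        · exact h
    rw [hsplit]
    refine hint_b.union ?_
    refine Measure.integrableOn_of_bounded (M := (2*κ) ^ γ) hμN.ne mG.aestronglyMeasurable ?_
    refine (ae_restrict_iff' (hSε.inter (measurableSet_lt measurable_const ha))).mpr
      (ae_of_all _ fun x hx => ?_)
    obtain ⟨hx1, hx2⟩ := hx
    simp only [Set.mem_setOf_eq] at hx1 hx2
    have h1 : max 0 (-(a x)) ≤ κ := max_le hκ.le (by linarith)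
    have h2 := abs_le.1 (hfg x)
    have h3 : max 0 (-(b x)) ≤ 2*κ := by linarith [h2.1]
    rw [Real.norm_eq_abs, abs_of_nonneg (by rw [hGx]; positivity), hGx]
    exact Real.rpow_le_rpow (le_max_left _ _) h3 hγ0.le
  -- part A : Lipschitz region
  have hμA : μ {x | a x ≤ -κ} < ⊤ :=
    (measure_mono (fun x (hx : a x ≤ -κ) => show a x ≤ 0 by linarith)).trans_lt hfin1
  have hptA : ∀ x ∈ {x | a x ≤ -κ}, |F x - G x| ≤ γ * (κ/2) ^ (γ-1) * ε := by
    intro x hx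
    simp only [Set.mem_setOf_eq] at hx
    have habx := abs_le.1 (hab x)
    have hfmx : κ ≤ max 0 (-(a x)) := le_max_of_le_right (by linarith)
    have hgmx : κ/2 ≤ max 0 (-(b x)) := le_max_of_le_right (by linarith)
    rw [hFx, hGx, abs_rpow_sub_rpow hγ0.le (le_max_left _ _) (le_max_left _ _)]
    have hms : κ/2 ≤ min (max 0 (-(a x))) (max 0 (-(b x))) := le_min (by linarith) hgmx
    have h1 := rpow_sub_le_lip hγ0 hγ1 (by linarith : (0:ℝ) < κ/2) hms
      (min_le_max (a := max 0 (-(a x))) (b := max 0 (-(b x))))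
    have h2 : max (max 0 (-(a x))) (max 0 (-(b x))) - min (max 0 (-(a x))) (max 0 (-(b x))) ≤ ε := by
      rw [max_sub_min_eq_abs, abs_sub_comm]
      exact hfg x
    have h3 : (0:ℝ) ≤ γ * (κ/2) ^ (γ-1) := by positivity
    linarith [h1, mul_le_mul_of_nonneg_left h2 h3]
  have hAbound : ∫ x in {x | a x ≤ -κ}, |F x - G x| ∂μ
      ≤ γ * (κ/2) ^ (γ-1) * ε * (μ {x | a x ≤ 0}).toReal := by
    have hnorm : ∀ x ∈ {x | a x ≤ -κ}, ‖|F x - G x|‖ ≤ γ * (κ/2) ^ (γ-1) * ε := by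
      intro x hx
      rw [Real.norm_eq_abs, abs_abs]
      exact hptA x hx
    have h := norm_setIntegral_le_of_norm_le_const (μ := μ) (s := {x | a x ≤ -κ})
      (f := fun x => |F x - G x|) hμA hnorm
    rw [Real.norm_eq_abs] at h
    have h2 : (μ {x | a x ≤ -κ}).toReal ≤ (μ {x | a x ≤ 0}).toReal :=
      ENNReal.toReal_mono hfin1.ne
        (measure_mono (fun x (hx : a x ≤ -κ) => show a x ≤ 0 by linarith))
    have h3 : (0:ℝ) ≤ γ * (κ/2) ^ (γ-1) * ε := by positivity
    calc ∫ x in {x | a x ≤ -κ}, |F x - G x| ∂μ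
        ≤ |∫ x in {x | a x ≤ -κ}, |F x - G x| ∂μ| := le_abs_self _
      _ ≤ γ * (κ/2) ^ (γ-1) * ε * (μ {x | a x ≤ -κ}).toReal := h
      _ ≤ γ * (κ/2) ^ (γ-1) * ε * (μ {x | a x ≤ 0}).toReal :=
          mul_le_mul_of_nonneg_left h2 h3
  -- part Aᶜ : reduce to N
  have hHeq : (fun x => |F x - G x|) = ({x | a x ≤ ε}).indicator (fun x => |F x - G x|) := by
    funext x
    by_cases hx : a x ≤ ε
    · exact (Set.indicator_of_mem (show x ∈ {x | a x ≤ ε} from hx) (fun x => |F x - G x|)).symm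
    · rw [Set.indicator_of_notMem (show x ∉ {x | a x ≤ ε} from hx), hG0 x hx, hF0 x (fun h => hx (by linarith)), sub_zero,
        abs_zero]
  have hsetEq : {x | a x ≤ -κ}ᶜ ∩ {x | a x ≤ ε} = {x | a x ≤ ε} ∩ {x | -κ < a x} := by
    ext x
    simp only [Set.mem_inter_iff, Set.mem_compl_iff, Set.mem_setOf_eq, not_le]
    tauto
  have hAc : ∫ x in {x | a x ≤ -κ}ᶜ, |F x - G x| ∂μ
      = ∫ x in {x | a x ≤ ε} ∩ {x | -κ < a x}, |F x - G x| ∂μ := by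
    conv_lhs => rw [hHeq]
    rw [setIntegral_indicator hSε, hsetEq]
  -- the key lintegral estimate on N
  set N := {x | a x ≤ ε} ∩ {x | -κ < a x} with hN
  have hNmeas : MeasurableSet N := hSε.inter (measurableSet_lt measurable_const ha)
  haveI hfinN : IsFiniteMeasure (μ.restrict N) :=
    ⟨by rw [Measure.restrict_apply_univ]; exact hμN⟩
  obtain ⟨sm, hsm⟩ : ∃ sm : X → ℝ, sm = fun x => min (max 0 (-(a x))) (max 0 (-(b x))) := ⟨_, rfl⟩
  obtain ⟨tm, htm⟩ : ∃ tm : X → ℝ, tm = fun x => max (max 0 (-(a x))) (max 0 (-(b x))) := ⟨_, rfl⟩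
  have msm : Measurable sm := by
    rw [hsm]; exact (measurable_const.max ha.neg).min (measurable_const.max hb.neg)
  have mtm : Measurable tm := by
    rw [htm]; exact (measurable_const.max ha.neg).max (measurable_const.max hb.neg)
  have hsm_nonneg : ∀ x, 0 ≤ sm x := by
    intro x; rw [hsm]; exact le_min (le_max_left _ _) (le_max_left _ _)
  have hsmtm : ∀ x, sm x ≤ tm x := by
    intro x; rw [hsm, htm]; exact min_le_max
  have htmsm : ∀ x, tm x - sm x ≤ ε := by
    intro x; rw [hsm, htm]
    simp only
    rw [max_sub_min_eq_abs, abs_sub_comm]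
    exact hfg x
  set GG : ℝ → ℝ≥0∞ := fun u => ENNReal.ofReal (γ * u ^ (γ - 1)) with hGG
  have m1 : Measurable fun u : ℝ => u ^ (γ - 1) := measurable_rpow_const' _
  have mGG : Measurable GG := by rw [hGG]; exact (m1.const_mul γ).ennreal_ofReal
  have hpoint : ∀ x, ENNReal.ofReal |F x - G x|
      = ∫⁻ u, (Set.Ioc (sm x) (tm x)).indicator GG u := by
    intro x
    rw [lintegral_indicator measurableSet_Ioc, hFx, hGx,
      abs_rpow_sub_rpow hγ0.le (le_max_left _ _) (le_max_left _ _), hGG, hsm, htm]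
    simp only
    exact (layercake_rpow hγ0 (le_min (le_max_left _ _) (le_max_left _ _)) min_le_max).symm
  have hunc : Measurable (Function.uncurry fun x u => (Set.Ioc (sm x) (tm x)).indicator GG u) := by
    have heq : (Function.uncurry fun x u => (Set.Ioc (sm x) (tm x)).indicator GG u)
        = fun p : X × ℝ =>
          ({p : X × ℝ | sm p.1 < p.2 ∧ p.2 ≤ tm p.1}).indicator (fun p => GG p.2) p := by
      funext p
      simp [Function.uncurry, Set.indicator_apply, Set.mem_Ioc]
    rw [heq]
    exact (mGG.comp measurable_snd).indicator
      ((measurableSet_lt (msm.comp measurable_fst) measurable_snd).inter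
        (measurableSet_le measurable_snd (mtm.comp measurable_fst)))
  have hswap : ∫⁻ x in N, ENNReal.ofReal |F x - G x| ∂μ
      = ∫⁻ u, ∫⁻ x in N, (Set.Ioc (sm x) (tm x)).indicator GG u ∂μ ∂(volume : Measure ℝ) := by
    calc ∫⁻ x in N, ENNReal.ofReal |F x - G x| ∂μ
        = ∫⁻ x in N, ∫⁻ u, (Set.Ioc (sm x) (tm x)).indicator GG u ∂(volume : Measure ℝ) ∂μ :=
          lintegral_congr (fun x => hpoint x)
      _ = ∫⁻ u, ∫⁻ x in N, (Set.Ioc (sm x) (tm x)).indicator GG u ∂μ ∂(volume : Measure ℝ) :=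
          lintegral_lintegral_swap hunc.aemeasurable
  have hinner : ∀ u : ℝ, ∫⁻ x in N, (Set.Ioc (sm x) (tm x)).indicator GG u ∂μ
      = GG u * μ ({x | sm x < u ∧ u ≤ tm x} ∩ N) := by
    intro u
    have hTmeas : MeasurableSet {x | sm x < u ∧ u ≤ tm x} :=
      (measurableSet_lt msm measurable_const).inter (measurableSet_le measurable_const mtm)
    have heq : (fun x => (Set.Ioc (sm x) (tm x)).indicator GG u)
        = ({x | sm x < u ∧ u ≤ tm x}).indicator (fun _ => GG u) := by
      funext x
      simp [Set.indicator_apply, Set.mem_Ioc]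
    rw [heq, lintegral_indicator hTmeas, setLIntegral_const, Measure.restrict_apply hTmeas]
  have hbound : ∀ u : ℝ, GG u * μ ({x | sm x < u ∧ u ≤ tm x} ∩ N)
      ≤ (Set.Ioc (0:ℝ) (2*κ)).indicator (fun u => GG u * ENNReal.ofReal (max C₀ 0 * (2*ε))) u := by
    intro u
    by_cases hu : u ∈ Set.Ioc (0:ℝ) (2*κ)
    · rw [Set.indicator_of_mem hu]
      refine mul_le_mul_right ?_ _
      obtain ⟨hu1, hu2⟩ := hu
      have hsub : {x | sm x < u ∧ u ≤ tm x} ∩ N ⊆ {x | |a x - (-u)| ≤ 2*ε} := by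
        rintro x ⟨hx1, hx2⟩
        obtain ⟨hxa, hxb⟩ := hx1
        obtain ⟨hxc, hxd⟩ := hx2
        simp only [Set.mem_setOf_eq] at hxc hxd ⊢
        have hf1 : sm x ≤ max 0 (-(a x)) := by rw [hsm]; exact min_le_left _ _
        have hf2 : max 0 (-(a x)) ≤ tm x := by rw [htm]; exact le_max_left _ _
        have hts := htmsm x
        have h6 : |max 0 (-(a x)) - u| ≤ ε := by
          rw [abs_le]; constructor <;> linarith
        rw [sub_neg_eq_add]
        by_cases ha0 : a x ≤ 0
        · have hmx : max 0 (-(a x)) = -(a x) := max_eq_right (by linarith)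
          rw [hmx] at h6
          have h7 := abs_le.1 h6
          rw [abs_le]; constructor <;> linarith [h7.1, h7.2]
        · have hmx : max 0 (-(a x)) = 0 := max_eq_left (by linarith [not_le.1 ha0])
          rw [hmx] at h6
          have h7 := abs_le.1 h6
          have h8 := not_le.1 ha0
          rw [abs_le]; constructor <;> linarith [h7.1, h7.2]
      calc μ ({x | sm x < u ∧ u ≤ tm x} ∩ N) ≤ μ {x | |a x - (-u)| ≤ 2*ε} := measure_mono hsub
        _ ≤ ENNReal.ofReal (C₀ * (2*ε)) :=
            hlevel (-u) ⟨by linarith, by linarith⟩ (2*ε) ⟨by linarith, by linarith⟩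
        _ ≤ ENNReal.ofReal (max C₀ 0 * (2*ε)) :=
            ENNReal.ofReal_le_ofReal (mul_le_mul_of_nonneg_right (le_max_left _ _) (by linarith))
    · rw [Set.indicator_of_notMem hu]
      have hempty : {x | sm x < u ∧ u ≤ tm x} ∩ N = ∅ := by
        rw [Set.eq_empty_iff_forall_notMem]
        rintro x ⟨⟨h1, h2⟩, h3, h4⟩
        simp only [Set.mem_setOf_eq] at h3 h4
        rw [Set.mem_Ioc, not_and_or] at hu
        have h5 := hsm_nonneg x
        have hf2 : max 0 (-(a x)) ≤ κ := max_le hκ.le (by linarith)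
        have h6 := abs_le.1 (hfg x)
        have h7 : tm x ≤ κ + ε := by
          rw [htm]; exact max_le (by linarith) (by linarith [h6.1])
        rcases hu with hu | hu
        · push_neg at hu; linarith
        · push_neg at hu; linarith
      rw [hempty, measure_empty, mul_zero]
  have hfinal : (∫⁻ u, (Set.Ioc (0:ℝ) (2*κ)).indicator
        (fun u => GG u * ENNReal.ofReal (max C₀ 0 * (2*ε))) u ∂(volume : Measure ℝ))
      = ENNReal.ofReal (2 * max C₀ 0 * (2*κ) ^ γ * ε) := by
    rw [lintegral_indicator measurableSet_Ioc]
    rw [lintegral_mul_const' _ _ ENNReal.ofReal_ne_top]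
    have hlc : ∫⁻ u in Set.Ioc (0:ℝ) (2*κ), GG u ∂(volume : Measure ℝ)
        = ENNReal.ofReal ((2*κ) ^ γ) := by
      rw [hGG, layercake_rpow hγ0 le_rfl (by linarith), Real.zero_rpow hγ0.ne', sub_zero]
    rw [hlc, ← ENNReal.ofReal_mul (by positivity)]
    congr 1
    ring
  have hnonnegC2 : (0:ℝ) ≤ 2 * max C₀ 0 * (2*κ) ^ γ * ε :=
    mul_nonneg (mul_nonneg (mul_nonneg (by norm_num) (le_max_right _ _))
      (Real.rpow_nonneg (by linarith) _)) hε.le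
  have hNbound : ∫ x in N, |F x - G x| ∂μ ≤ 2 * max C₀ 0 * (2*κ) ^ γ * ε := by
    rw [integral_eq_lintegral_of_nonneg_ae (f := fun x => |F x - G x|) (ae_of_all _ fun x => abs_nonneg _)
      (mF.sub mG).abs.aestronglyMeasurable]
    have hle : ∫⁻ x in N, ENNReal.ofReal |F x - G x| ∂μ
        ≤ ENNReal.ofReal (2 * max C₀ 0 * (2*κ) ^ γ * ε) := by
      rw [hswap, ← hfinal]
      refine lintegral_mono fun u => ?_
      rw [hinner u]
      exact hbound u
    calc (∫⁻ x in N, ENNReal.ofReal |F x - G x| ∂μ).toReal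
        ≤ (ENNReal.ofReal (2 * max C₀ 0 * (2*κ) ^ γ * ε)).toReal :=
          ENNReal.toReal_mono ENNReal.ofReal_ne_top hle
      _ = 2 * max C₀ 0 * (2*κ) ^ γ * ε := ENNReal.toReal_ofReal hnonnegC2
  have habs_int : Integrable (fun x => |F x - G x|) μ := (hIF.sub hIG).abs
  have step1 : |(∫ x, F x ∂μ) - ∫ x, G x ∂μ| ≤ ∫ x, |F x - G x| ∂μ := by
    rw [← integral_sub hIF hIG]
    calc |∫ x, (F x - G x) ∂μ| = ‖∫ x, (F x - G x) ∂μ‖ := (Real.norm_eq_abs _).symm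
      _ ≤ ∫ x, ‖F x - G x‖ ∂μ := norm_integral_le_integral_norm _
      _ = ∫ x, |F x - G x| ∂μ := by simp [Real.norm_eq_abs]
  have step2 : ∫ x, |F x - G x| ∂μ
      = (∫ x in {x | a x ≤ -κ}, |F x - G x| ∂μ) + ∫ x in {x | a x ≤ -κ}ᶜ, |F x - G x| ∂μ :=
    (integral_add_compl hAmeas habs_int).symm
  calc |(∫ x, F x ∂μ) - ∫ x, G x ∂μ| ≤ ∫ x, |F x - G x| ∂μ := step1
    _ = _ := step2
    _ ≤ γ * (κ/2) ^ (γ-1) * ε * (μ {x | a x ≤ 0}).toReal + 2 * max C₀ 0 * (2*κ) ^ γ * ε := by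
        rw [hAc]
        exact add_le_add hAbound hNbound
    _ = (γ * (κ/2) ^ (γ - 1) * (μ {x | a x ≤ 0}).toReal + 2 * max C₀ 0 * (2*κ) ^ γ) * ε := by
        ring
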